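/- Let k ≥ 2, G = ℤ/Nℤ with N prime, δ > 0, D ≥ 2, and f̃ : G → [0,1] a function with E f̃ ≥ δ/2. Assuming the quantitative Szemerédi theorem (for any δ' > 0 and h : [D] → [0,1] with E h ≥ δ', one has E_{n,d∈[D]} h(n)h(n+d)⋯h(n+(k−1)d) ≫_{k,δ'} 1, where h is extended by 0 outside [D]), it follows that Λ_D(f̃,…,f̃) ≫_{k,δ} 1, where Λ_D(f_1,…,f_k) = E_{n∈G} E_{d∈[D]} f_1(n)f_2(n+d)⋯f_k(n+(k−1)d). -/

import Mathlib

/-- Assuming the quantitative Szemerédi theorem, any f̃ : G → [0,1] with E f̃ ≥ δ/2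
satisfies Λ_D(f̃,…,f̃) ≫_{k,δ} 1, where
Λ_D(f₁,…,f_k) = E_{n∈G} E_{d∈[D]} f₁(n)f₂(n+d)⋯f_k(n+(k−1)d). -/
theorem stmt17 (k : ℕ) (hk : 2 ≤ k) (δ : ℝ) (hδ : 0 < δ)
    (hSz : ∀ δ' : ℝ, 0 < δ' → ∃ c : ℝ, 0 < c ∧ ∀ D : ℕ, 1 ≤ D →
      ∀ h : ℤ → ℝ, (∀ n, 0 ≤ h n ∧ h n ≤ 1) →
      (∀ n : ℤ, n ∉ Finset.Icc (1 : ℤ) (D : ℤ) → h n = 0) →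
      δ' ≤ (∑ n ∈ Finset.Icc (1 : ℤ) (D : ℤ), h n) / (D : ℝ) →
      c ≤ (∑ n ∈ Finset.Icc (1 : ℤ) (D : ℤ), ∑ d ∈ Finset.Icc (1 : ℤ) (D : ℤ),
            ∏ j : Fin k, h (n + ((j : ℕ) : ℤ) * d)) / ((D : ℝ) ^ 2)) :
    ∃ c : ℝ, 0 < c ∧ ∀ (N : ℕ) [NeZero N], N.Prime → ∀ D : ℕ, 2 ≤ D →
      ∀ ftil : ZMod N → ℝ, (∀ n, 0 ≤ ftil n ∧ ftil n ≤ 1) →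
      δ / 2 ≤ (∑ n : ZMod N, ftil n) / (N : ℝ) →
      c ≤ (∑ n : ZMod N, ∑ d ∈ Finset.Icc (1 : ℤ) (D : ℤ),
            ∏ j : Fin k, ftil (n + ((j : ℕ) : ZMod N) * ((d : ℤ) : ZMod N)))
          / ((N : ℝ) * (D : ℝ)) := by
  obtain ⟨c, hc, hSz'⟩ := hSz (δ/4) (by positivity)
  refine ⟨c * (δ/4), by positivity, ?_⟩
  intro N _ hNp D hD ftil hf hmean
  have hN0 : (0:ℝ) < N := by exact_mod_cast hNp.pos
  have hD1 : 1 ≤ D := le_trans (by norm_num) hD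
  have hD0 : (0:ℝ) < D := by exact_mod_cast Nat.lt_of_lt_of_le Nat.zero_lt_one hD1
  set I : Finset ℤ := Finset.Icc (1:ℤ) (D:ℤ) with hI
  have hIcard : (I.card : ℝ) = D := by
    simp [hI, Int.card_Icc]
  have hTrans : ∀ g : ZMod N → ℝ, ∀ a : ZMod N,
      ∑ m : ZMod N, g (m + a) = ∑ m : ZMod N, g m := by
    intro g a
    exact Fintype.sum_equiv (Equiv.addRight a) _ _ (fun m => rfl)
  set M : Finset (ZMod N) :=
    Finset.univ.filter (fun m : ZMod N => (δ/4) * D ≤ ∑ n ∈ I, ftil (m + (n : ZMod N))) with hM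
  have hwin : ∀ m : ZMod N, ∑ n ∈ I, ftil (m + (n : ZMod N)) ≤ D := by
    intro m
    calc ∑ n ∈ I, ftil (m + (n : ZMod N)) ≤ ∑ n ∈ I, 1 :=
          Finset.sum_le_sum (fun n _ => (hf _).2)
      _ = (I.card : ℝ) := by simp
      _ = D := hIcard
  have htot : ∑ m : ZMod N, ∑ n ∈ I, ftil (m + (n : ZMod N)) = D * ∑ x : ZMod N, ftil x := by
    calc ∑ m : ZMod N, ∑ n ∈ I, ftil (m + (n : ZMod N))
        = ∑ n ∈ I, ∑ m : ZMod N, ftil (m + (n : ZMod N)) := Finset.sum_comm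
      _ = ∑ n ∈ I, ∑ x : ZMod N, ftil x :=
          Finset.sum_congr rfl (fun n _ => hTrans ftil (n : ZMod N))
      _ = D * ∑ x : ZMod N, ftil x := by
          rw [Finset.sum_const, nsmul_eq_mul, hIcard]
  have hsum : (δ/2) * N ≤ ∑ x : ZMod N, ftil x := by
    rw [le_div_iff₀ hN0] at hmean
    linarith
  have hMcard : (δ/4) * N ≤ (M.card : ℝ) := by
    have hsplit : ∑ m : ZMod N, ∑ n ∈ I, ftil (m + (n : ZMod N))
        = (∑ m ∈ M, ∑ n ∈ I, ftil (m + (n : ZMod N)))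
        + ∑ m ∈ Finset.univ \ M, ∑ n ∈ I, ftil (m + (n : ZMod N)) := by
      rw [Finset.sum_sdiff_eq_sub (Finset.subset_univ M)]; ring
    have h1 : ∑ m ∈ M, ∑ n ∈ I, ftil (m + (n : ZMod N)) ≤ (M.card : ℝ) * D := by
      calc ∑ m ∈ M, ∑ n ∈ I, ftil (m + (n : ZMod N)) ≤ ∑ m ∈ M, (D:ℝ) :=
            Finset.sum_le_sum (fun m _ => hwin m)
        _ = (M.card : ℝ) * D := by rw [Finset.sum_const, nsmul_eq_mul]
    have h2 : ∑ m ∈ Finset.univ \ M, ∑ n ∈ I, ftil (m + (n : ZMod N)) ≤ (N:ℝ) * ((δ/4) * D) := by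
      calc ∑ m ∈ Finset.univ \ M, ∑ n ∈ I, ftil (m + (n : ZMod N))
          ≤ ∑ m ∈ Finset.univ \ M, (δ/4) * (D:ℝ) := by
            refine Finset.sum_le_sum (fun m hm => ?_)
            rw [Finset.mem_sdiff, hM, Finset.mem_filter] at hm
            push_neg at hm
            exact le_of_lt (hm.2 (Finset.mem_univ m))
        _ = ((Finset.univ \ M).card : ℝ) * ((δ/4) * D) := by
            rw [Finset.sum_const, nsmul_eq_mul]
        _ ≤ (N:ℝ) * ((δ/4) * D) := by
            refine mul_le_mul_of_nonneg_right ?_ (by positivity)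
            have h3 : (Finset.univ \ M).card ≤ (Finset.univ : Finset (ZMod N)).card :=
              Finset.card_le_card (Finset.sdiff_subset)
            have hcu : ((Finset.univ : Finset (ZMod N)).card : ℝ) = N := by
              simp [ZMod.card]
            calc ((Finset.univ \ M).card : ℝ)
                ≤ ((Finset.univ : Finset (ZMod N)).card : ℝ) := by exact_mod_cast h3
              _ = N := hcu
    nlinarith [hsplit, h1, h2, htot, hsum, hD0]
  have hSzm : ∀ m ∈ M, c * (D:ℝ)^2 ≤ ∑ n ∈ I, ∑ d ∈ I,
      ∏ j : Fin k, (if (n + ((j:ℕ):ℤ) * d) ∈ I then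
        ftil (m + ((n + ((j:ℕ):ℤ) * d : ℤ) : ZMod N)) else 0) := by
    intro m hm
    rw [hM, Finset.mem_filter] at hm
    have key := hSz' D hD1 (fun x => if x ∈ I then ftil (m + (x : ZMod N)) else 0)
      (fun n => by
        by_cases h : n ∈ I <;> simp [h, hf (m + (n : ZMod N))])
      (fun n hn => by beta_reduce; exact if_neg hn)
      (by
        rw [le_div_iff₀ hD0]
        calc (δ/4) * D ≤ ∑ n ∈ I, ftil (m + (n : ZMod N)) := hm.2
          _ = ∑ n ∈ I, (if n ∈ I then ftil (m + (n : ZMod N)) else 0) :=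
              (Finset.sum_congr rfl (fun n hn => by rw [if_pos hn])).symm)
    rw [le_div_iff₀ (by positivity)] at key
    exact key
  set Λ : ℝ := ∑ n : ZMod N, ∑ d ∈ I,
      ∏ j : Fin k, ftil (n + ((j : ℕ) : ZMod N) * ((d : ℤ) : ZMod N)) with hΛ
  have hterm : ∀ m : ZMod N, ∀ n ∈ I, ∀ d ∈ I,
      (∏ j : Fin k, (if (n + ((j:ℕ):ℤ) * d) ∈ I then
        ftil (m + ((n + ((j:ℕ):ℤ) * d : ℤ) : ZMod N)) else 0))
      ≤ ∏ j : Fin k, ftil ((m + (n : ZMod N)) + ((j : ℕ) : ZMod N) * ((d : ℤ) : ZMod N)) := by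
    intro m n hn d hd
    refine Finset.prod_le_prod (fun j _ => ?_) (fun j _ => ?_)
    · by_cases h : (n + ((j:ℕ):ℤ) * d) ∈ I <;> simp [h, (hf _).1]
    · have hcast : (m + ((n + ((j:ℕ):ℤ) * d : ℤ) : ZMod N))
          = (m + (n : ZMod N)) + ((j : ℕ) : ZMod N) * ((d : ℤ) : ZMod N) := by
        push_cast
        ring
      by_cases h : (n + ((j:ℕ):ℤ) * d) ∈ I
      · rw [if_pos h, hcast]
      · rw [if_neg h, ← hcast]
        exact (hf _).1
  have hΛ0 : ∀ x : ZMod N, 0 ≤ ∑ d ∈ I,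
      ∏ j : Fin k, ftil (x + ((j : ℕ) : ZMod N) * ((d : ℤ) : ZMod N)) :=
    fun x => Finset.sum_nonneg fun d _ => Finset.prod_nonneg fun j _ => (hf _).1
  have hmain : (M.card : ℝ) * (c * (D:ℝ)^2) ≤ D * Λ := by
    have step1 : (M.card : ℕ) • (c * (D:ℝ)^2) ≤ ∑ m ∈ M, ∑ n ∈ I,
        ∑ d ∈ I, ∏ j : Fin k,
          ftil ((m + (n : ZMod N)) + ((j : ℕ) : ZMod N) * ((d : ℤ) : ZMod N)) := by
      refine Finset.card_nsmul_le_sum M _ _ (fun m hm => ?_)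
      calc c * (D:ℝ)^2 ≤ _ := hSzm m hm
        _ ≤ _ := Finset.sum_le_sum (fun n hn => Finset.sum_le_sum (fun d hd =>
            hterm m n hn d hd))
    rw [nsmul_eq_mul] at step1
    have step2 : ∑ m ∈ M, ∑ n ∈ I,
        ∑ d ∈ I, ∏ j : Fin k,
          ftil ((m + (n : ZMod N)) + ((j : ℕ) : ZMod N) * ((d : ℤ) : ZMod N))
        ≤ ∑ m : ZMod N, ∑ n ∈ I,
        ∑ d ∈ I, ∏ j : Fin k,
          ftil ((m + (n : ZMod N)) + ((j : ℕ) : ZMod N) * ((d : ℤ) : ZMod N)) :=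
      Finset.sum_le_sum_of_subset_of_nonneg (Finset.subset_univ M)
        (fun m _ _ => Finset.sum_nonneg fun n _ => hΛ0 _)
    have step3 : ∑ m : ZMod N, ∑ n ∈ I,
        ∑ d ∈ I, ∏ j : Fin k,
          ftil ((m + (n : ZMod N)) + ((j : ℕ) : ZMod N) * ((d : ℤ) : ZMod N))
        = D * Λ := by
      calc ∑ m : ZMod N, ∑ n ∈ I, ∑ d ∈ I, ∏ j : Fin k,
            ftil ((m + (n : ZMod N)) + ((j : ℕ) : ZMod N) * ((d : ℤ) : ZMod N))
          = ∑ n ∈ I, ∑ m : ZMod N, ∑ d ∈ I, ∏ j : Fin k,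
            ftil ((m + (n : ZMod N)) + ((j : ℕ) : ZMod N) * ((d : ℤ) : ZMod N)) :=
            Finset.sum_comm
        _ = ∑ n ∈ I, Λ := Finset.sum_congr rfl (fun n _ => hTrans (fun x => ∑ d ∈ I,
            ∏ j : Fin k, ftil (x + ((j : ℕ) : ZMod N) * ((d : ℤ) : ZMod N))) (n : ZMod N))
        _ = D * Λ := by rw [Finset.sum_const, nsmul_eq_mul, hIcard]
    linarith
  rw [le_div_iff₀ (by positivity)]
  have hfin : c * (δ/4) * (N * D) * D ≤ Λ * D := by
    calc c * (δ/4) * (N * D) * D = ((δ/4) * N) * (c * (D:ℝ)^2) := by ring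
      _ ≤ (M.card : ℝ) * (c * (D:ℝ)^2) :=
          mul_le_mul_of_nonneg_right hMcard (by positivity)
      _ ≤ D * Λ := hmain
      _ = Λ * D := by ring
  exact le_of_mul_le_mul_right hfin hD0
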